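/- Let 0 < μ < 1 and μ² ≤ ν ≤ μ. With P₁(q) = 3q² − 2q³, the supremum of ∫ P₁(q) dπ(q) over all probability measures π on [0,1] with ∫ q dπ = μ and ∫ q² dπ = ν equals 3ν − 2ν²/μ, and this supremum is attained. -/

import Mathlib

open MeasureTheory

def P1 (q : ℝ) : ℝ := 3 * q ^ 2 - 2 * q ^ 3

lemma integrable_dirac' (f : ℝ → ℝ) (hf : Continuous f) (a : ℝ) :
    Integrable f (Measure.dirac a) := by
  refine ⟨hf.aestronglyMeasurable, ?_⟩
  rw [HasFiniteIntegral, lintegral_dirac]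
  exact ENNReal.coe_lt_top

lemma contP1 : Continuous P1 :=
  (continuous_const.mul (continuous_pow 2)).sub (continuous_const.mul (continuous_pow 3))

lemma integ_bdd (π : Measure ℝ) [IsProbabilityMeasure π]
    (h : ∀ᵐ q ∂π, q ∈ Set.Icc (0:ℝ) 1) (f : ℝ → ℝ) (hf : Continuous f)
    (C : ℝ) (hC : ∀ q ∈ Set.Icc (0:ℝ) 1, ‖f q‖ ≤ C) : Integrable f π :=
  (integrable_const C).mono' hf.aestronglyMeasurable (h.mono fun q hq => hC q hq)

/-- **Sharp three-vote upper endpoint.** For `0 < μ < 1` and `μ² ≤ ν ≤ μ`, the supremum of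
`∫ P₁ dπ` over all probability measures `π` on `[0,1]` with first moment `μ` and second
moment `ν` equals `3ν − 2ν²/μ`, and it is attained. -/
theorem three_vote_upper (μ ν : ℝ) (hμ0 : 0 < μ) (hμ1 : μ < 1)
    (hν1 : μ ^ 2 ≤ ν) (hν2 : ν ≤ μ) :
    IsGreatest {x | ∃ π : Measure ℝ, IsProbabilityMeasure π ∧
        π ((Set.Icc (0 : ℝ) 1)ᶜ) = 0 ∧ (∫ q, q ∂π) = μ ∧ (∫ q, q ^ 2 ∂π) = ν ∧
        (∫ q, P1 q ∂π) = x}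
      (3 * ν - 2 * ν ^ 2 / μ) := by
  have hν0 : 0 < ν := lt_of_lt_of_le (by positivity) hν1
  set a : ℝ := ν / μ with ha
  have ha0 : 0 < a := by positivity
  have ha1 : a ≤ 1 := by rw [ha, div_le_one hμ0]; exact hν2
  set p : ℝ := μ ^ 2 / ν with hp
  have hp0 : 0 < p := by positivity
  have hp1 : p ≤ 1 := by rw [hp, div_le_one hν0]; exact hν1
  constructor
  · -- membership: extremal two-point measure
    refine ⟨ENNReal.ofReal p • Measure.dirac a + ENNReal.ofReal (1 - p) • Measure.dirac 0,
      ?_, ?_, ?_, ?_, ?_⟩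
    · constructor
      simp only [Measure.add_apply, Measure.smul_apply, smul_eq_mul, Measure.dirac_apply,
        Set.indicator_of_mem (Set.mem_univ _), Pi.one_apply, mul_one]
      rw [← ENNReal.ofReal_add hp0.le (by linarith)]
      norm_num
    · have h1 : Measure.dirac a ((Set.Icc (0:ℝ) 1)ᶜ) = 0 := by
        rw [Measure.dirac_apply, Set.indicator_of_notMem]
        simp only [Set.mem_compl_iff, not_not]
        exact Set.mem_Icc.mpr ⟨ha0.le, ha1⟩
      have h0 : Measure.dirac (0:ℝ) ((Set.Icc (0:ℝ) 1)ᶜ) = 0 := by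
        rw [Measure.dirac_apply, Set.indicator_of_notMem]
        simp only [Set.mem_compl_iff, not_not]
        exact Set.mem_Icc.mpr ⟨le_refl _, by norm_num⟩
      simp [h1, h0]
    all_goals {
      rw [integral_add_measure
        ((integrable_dirac' _ (by first | exact contP1 | exact continuous_id | exact continuous_pow 2) _).smul_measure ENNReal.ofReal_ne_top)
        ((integrable_dirac' _ (by first | exact contP1 | exact continuous_id | exact continuous_pow 2) _).smul_measure ENNReal.ofReal_ne_top),
        integral_smul_measure, integral_smul_measure, integral_dirac, integral_dirac,
        ENNReal.toReal_ofReal hp0.le, ENNReal.toReal_ofReal (by linarith : (0:ℝ) ≤ 1 - p)]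
      simp only [smul_eq_mul, P1]
      rw [hp, ha]
      field_simp
      ring }
  · -- upper bound
    rintro x ⟨π, hprob, hnull, hm1, hm2, hP⟩
    have hae : ∀ᵐ q ∂π, q ∈ Set.Icc (0:ℝ) 1 := by
      rw [MeasureTheory.ae_iff]
      convert hnull using 2
      rfl
    have hintP : Integrable P1 π :=
      integ_bdd π hae P1 contP1 5 (fun q hq => by
        rw [Set.mem_Icc] at hq; rw [Real.norm_eq_abs, abs_le]; unfold P1
        constructor <;> nlinarith [hq.1, hq.2])
    have hg : Integrable (fun q => (3 - 4 * a) * q ^ 2 + 2 * a ^ 2 * q) π :=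
      integ_bdd π hae _ ((continuous_const.mul (continuous_pow 2)).add (continuous_const.mul continuous_id)) (7 + 2 * a ^ 2 + 4 * a) (fun q hq => by
        rw [Set.mem_Icc] at hq; rw [Real.norm_eq_abs, abs_le]
        constructor <;> nlinarith [hq.1, hq.2, sq_nonneg a])
    have hle : (∫ q, P1 q ∂π) ≤ ∫ q, (3 - 4 * a) * q ^ 2 + 2 * a ^ 2 * q ∂π := by
      refine integral_mono_ae hintP hg (hae.mono fun q hq => ?_)
      rw [Set.mem_Icc] at hq
      have heq : (3 - 4 * a) * q ^ 2 + 2 * a ^ 2 * q - P1 q = 2 * q * (q - a) ^ 2 := by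
        unfold P1; ring
      have h2 : 0 ≤ 2 * q * (q - a) ^ 2 :=
        mul_nonneg (by linarith [hq.1]) (sq_nonneg _)
      show P1 q ≤ (3 - 4 * a) * q ^ 2 + 2 * a ^ 2 * q
      linarith
    have hint1 : Integrable (fun q : ℝ => q) π :=
      integ_bdd π hae _ continuous_id 1 (fun q hq => by
        rw [Set.mem_Icc] at hq; rw [Real.norm_eq_abs, abs_le]; constructor <;> linarith [hq.1, hq.2])
    have hint2 : Integrable (fun q : ℝ => q ^ 2) π :=
      integ_bdd π hae _ (continuous_pow 2) 1 (fun q hq => by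
        rw [Set.mem_Icc] at hq; rw [Real.norm_eq_abs, abs_le]
        constructor <;> nlinarith [hq.1, hq.2])
    have hval : (∫ q, (3 - 4 * a) * q ^ 2 + 2 * a ^ 2 * q ∂π)
        = (3 - 4 * a) * ν + 2 * a ^ 2 * μ := by
      rw [integral_add (hint2.const_mul _) (hint1.const_mul _),
        integral_const_mul, integral_const_mul, hm1, hm2]
    have : x ≤ (3 - 4 * a) * ν + 2 * a ^ 2 * μ := by
      rw [← hP, ← hval]; exact hle
    have heq : (3 - 4 * a) * ν + 2 * a ^ 2 * μ = 3 * ν - 2 * ν ^ 2 / μ := by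
      rw [ha]; field_simp; ring
    linarith [heq ▸ this]
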